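/- Lagrangian dual transform equivalence: for q > 0 and S ≥ 0, q·log(1+S) = max_{γ ≥ 0} [q log(1+γ) - qγ + q(1+γ)·S/(1+S)]; hence for finitely many pairs (qₙ, Sₙ), ∑ₙ qₙ log(1+Sₙ) = max_{γ ∈ ℝ≥0^N} ∑ₙ [qₙ log(1+γₙ) - qₙγₙ + qₙ(1+γₙ)Sₙ/(1+Sₙ)]. -/
import Mathlib

lemma ldt_le (q0 S0 γ : ℝ) (hq : 0 < q0) (hS : 0 ≤ S0) (hγ : 0 ≤ γ) :
    q0 * Real.log (1 + γ) - q0 * γ + q0 * (1 + γ) * S0 / (1 + S0)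
      ≤ q0 * Real.log (1 + S0) := by
  have hb : (0:ℝ) < 1 + S0 := by linarith
  have ha : (0:ℝ) < 1 + γ := by linarith
  have key : Real.log (1 + γ) - Real.log (1 + S0) ≤ (1 + γ) / (1 + S0) - 1 := by
    have := Real.log_le_sub_one_of_pos (div_pos ha hb)
    rwa [Real.log_div ha.ne' hb.ne'] at this
  have h2 : Real.log (1 + γ) - γ + (1 + γ) * S0 / (1 + S0) ≤ Real.log (1 + S0) := by
    have : (1 + γ) / (1 + S0) - 1 - γ + (1 + γ) * S0 / (1 + S0) = 0 := by
      field_simp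
      ring
    linarith
  have := mul_le_mul_of_nonneg_left h2 hq.le
  have h3 : q0 * (1 + γ) * S0 / (1 + S0) = q0 * ((1 + γ) * S0 / (1 + S0)) := by
    ring
  nlinarith [this]

lemma ldt_eq (q0 S0 : ℝ) :
    q0 * Real.log (1 + S0) - q0 * S0 + q0 * (1 + S0) * S0 / (1 + S0)
      = q0 * Real.log (1 + S0) ∨ (1 + S0 = 0) := by
  by_cases h : (1:ℝ) + S0 = 0
  · exact Or.inr h
  · left
    field_simp
    ring

/-- Lagrangian dual transform equivalence (Lemma 2): single term and sum form. -/
theorem lagrangian_dual_equivalence (N : ℕ) (q S : Fin N → ℝ)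
    (hq : ∀ n, 0 < q n) (hS : ∀ n, 0 ≤ S n) :
    (∀ q0 S0 : ℝ, 0 < q0 → 0 ≤ S0 →
      IsGreatest
        {v : ℝ | ∃ γ : ℝ, 0 ≤ γ ∧
          v = q0 * Real.log (1 + γ) - q0 * γ + q0 * (1 + γ) * S0 / (1 + S0)}
        (q0 * Real.log (1 + S0))) ∧
    IsGreatest
      {v : ℝ | ∃ γ : Fin N → ℝ, (∀ n, 0 ≤ γ n) ∧
        v = ∑ n, (q n * Real.log (1 + γ n) - q n * γ n
              + q n * (1 + γ n) * S n / (1 + S n))}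
      (∑ n, q n * Real.log (1 + S n)) := by
  have heq : ∀ q0 S0 : ℝ, 0 ≤ S0 →
      q0 * Real.log (1 + S0) - q0 * S0 + q0 * (1 + S0) * S0 / (1 + S0)
        = q0 * Real.log (1 + S0) := by
    intro q0 S0 hS0
    rcases ldt_eq q0 S0 with h | h
    · exact h
    · linarith
  constructor
  · intro q0 S0 hq0 hS0
    constructor
    · exact ⟨S0, hS0, (heq q0 S0 hS0).symm⟩
    · rintro v ⟨γ, hγ, rfl⟩
      exact ldt_le q0 S0 γ hq0 hS0 hγ
  · constructor
    · refine ⟨S, hS, ?_⟩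
      exact (Finset.sum_congr rfl fun n _ => heq (q n) (S n) (hS n)).symm
    · rintro v ⟨γ, hγ, rfl⟩
      exact Finset.sum_le_sum fun n _ => ldt_le (q n) (S n) (γ n) (hq n) (hS n) (hγ n)
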